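/- Let C be a compact Hausdorff space and φ : C → C a minimal homeomorphism, i.e. a homeomorphism such that the only closed subsets V ⊆ C with φ(V) = V are ∅ and C. Let m : C → ℤ and f : C → ℤ be continuous functions (ℤ carrying the discrete topology) such that f(x) = m(x) · f(φ(x)) for every x ∈ C. If there exists a point x₀ ∈ C with m(x₀) ∉ {−1, 1}, then f is identically zero. -/

import Mathlib

/-- Let `φ` be a minimal homeomorphism of a compact Hausdorff space `C`,
and let `m, f : C → ℤ` be continuous (equivalently locally constant) functions with
`f(x) = m(x) · f(φ(x))` for all `x`. If `m(x₀) ∉ {-1, 1}` for some `x₀`, then `f ≡ 0`. -/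
theorem stmt19 {C : Type*} [TopologicalSpace C] [CompactSpace C] [T2Space C]
    (φ : C ≃ₜ C)
    (hmin : ∀ V : Set C, IsClosed V → φ '' V = V → V = ∅ ∨ V = Set.univ)
    (m f : C → ℤ) (hm : Continuous m) (hf : Continuous f)
    (hrel : ∀ x : C, f x = m x * f (φ x))
    (x₀ : C) (hx₀ : m x₀ ≠ -1 ∧ m x₀ ≠ 1) :
    ∀ x : C, f x = 0 := by
  classical
  set g : C → C := ⇑φ with hg
  set U : Set C := {x | m x ≠ -1 ∧ m x ≠ 1} with hUdef
  have hUopen : IsOpen U := by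
    rw [hUdef]
    exact (isOpen_discrete {k : ℤ | k ≠ -1 ∧ k ≠ 1}).preimage hm
  have hx₀U : x₀ ∈ U := hx₀
  set A : Set C := ⋂ n : ℕ, (g^[n]) ⁻¹' Uᶜ with hAdef
  have hAclosed : IsClosed A :=
    isClosed_iInter fun n => hUopen.isClosed_compl.preimage (φ.continuous.iterate n)
  have hgA : g '' A ⊆ A := by
    rintro _ ⟨x, hx, rfl⟩
    simp only [hAdef, Set.mem_iInter, Set.mem_preimage] at hx ⊢
    intro n
    rw [← Function.iterate_succ_apply]
    exact hx (n + 1)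
  have hAempty : A = ∅ := by
    by_contra hne
    have hAne : A.Nonempty := Set.nonempty_iff_ne_empty.2 hne
    set V : ℕ → Set C := fun n => g^[n] '' A with hVdef
    have hVcompact : ∀ n, IsCompact (V n) :=
      fun n => (hAclosed.isCompact).image (φ.continuous.iterate n)
    have hVclosed : ∀ n, IsClosed (V n) := fun n => (hVcompact n).isClosed
    have hgV : ∀ n, g '' V n = V (n + 1) := by
      intro n
      rw [hVdef]
      simp only []
      rw [Function.iterate_succ' g n, Set.image_comp]
    have hVmono : ∀ n, V (n + 1) ⊆ V n := by
      intro n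
      rw [← hgV n]
      have : g '' V n = g^[n] '' (g '' A) := by
        rw [hVdef]
        simp only [Set.image_image]
        have hfun : (fun x => g (g^[n] x)) = fun x => g^[n] (g x) := by
          funext a
          rw [← Function.iterate_succ_apply' g n a, Function.iterate_succ_apply]
        rw [hfun]
      rw [this]
      exact Set.image_mono hgA
    have hVne : ∀ n, (V n).Nonempty := fun n => hAne.image _
    have hBne : (⋂ n, V n).Nonempty :=
      IsCompact.nonempty_iInter_of_sequence_nonempty_isCompact_isClosed
        V hVmono hVne (hVcompact 0) hVclosed
    have hBclosed : IsClosed (⋂ n, V n) := isClosed_iInter hVclosed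
    have hBinv : φ '' (⋂ n, V n) = ⋂ n, V n := by
      have himg : φ '' (⋂ n, V n) = ⋂ n, g '' V n :=
        Set.image_iInter φ.bijective V
      rw [himg]
      apply le_antisymm
      · exact Set.subset_iInter fun n =>
          (Set.iInter_subset _ n).trans ((hgV n) ▸ hVmono n)
      · exact Set.subset_iInter fun n =>
          (Set.iInter_subset _ (n + 1)).trans (le_of_eq (hgV n).symm)
    rcases hmin _ hBclosed hBinv with h | h
    · rw [h] at hBne; exact hBne.ne_empty rfl
    · have hx0 : x₀ ∈ ⋂ n, V n := h ▸ Set.mem_univ x₀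
      have hx₀A : x₀ ∈ A := by
        have := Set.mem_iInter.1 hx0 0
        simpa [hVdef] using this
      have := Set.mem_iInter.1 hx₀A 0
      exact this hx₀U
  have hforward : ∀ x : C, ∃ n : ℕ, g^[n] x ∈ U := by
    intro x
    by_contra h
    push_neg at h
    have : x ∈ A := Set.mem_iInter.2 fun n => h n
    rw [hAempty] at this
    exact this
  have hdvd : ∀ (n : ℕ) (x : C), f (g^[n] x) ∣ f x := by
    intro n
    induction n with
    | zero => intro x; simp
    | succ n ih =>
      intro x
      have h1 : f (g^[n + 1] x) ∣ f (g^[n] x) := by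
        rw [Function.iterate_succ_apply']
        exact ⟨m (g^[n] x), by rw [hrel (g^[n] x)]; ring⟩
      exact h1.trans (ih x)
  have hpow : ∀ (k : ℕ) (x : C), f x ≠ 0 → (2 : ℤ) ^ k ≤ |f x| := by
    intro k
    induction k with
    | zero => intro x hx; simpa using Int.one_le_abs (by omega)
    | succ k ih =>
      intro x hx
      obtain ⟨n, hn⟩ := hforward x
      set y := g^[n] x with hy
      have hdy : f y ∣ f x := hdvd n x
      have hfy : f y ≠ 0 := fun h => hx (zero_dvd_iff.1 (h ▸ hdy))
      have hrely : f y = m y * f (φ y) := hrel y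
      have hfz : f (φ y) ≠ 0 := fun h => hfy (by rw [hrely, h, mul_zero])
      have hmy : m y ≠ 0 := fun h => hfy (by rw [hrely, h, zero_mul])
      have hmy1 : m y ≠ -1 := hn.1
      have hmy1' : m y ≠ 1 := hn.2
      have hmy2 : 2 ≤ |m y| := by
        rcases abs_cases (m y) with ⟨h, _⟩ | ⟨h, _⟩ <;> omega
      have h1 : |f y| ≤ |f x| :=
        Int.le_of_dvd (abs_pos.2 hx) ((abs_dvd _ _).2 ((dvd_abs _ _).2 hdy))
      have h2 : (2 : ℤ) ^ k ≤ |f (φ y)| := ih (φ y) hfz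
      have h3 : |f y| = |m y| * |f (φ y)| := by rw [hrely, abs_mul]
      calc (2 : ℤ) ^ (k + 1) = 2 * 2 ^ k := by ring
        _ ≤ |m y| * |f (φ y)| := mul_le_mul hmy2 h2 (by positivity) (by omega)
        _ = |f y| := h3.symm
        _ ≤ |f x| := h1
  intro x
  by_contra hx
  obtain ⟨k, hk⟩ := pow_unbounded_of_one_lt (|f x|) (by norm_num : (1:ℤ) < 2)
  exact absurd (hpow k x hx) (not_le.2 hk)
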